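/- Let G ∈ 𝒢_{0,m2} (no loops, no restriction on the size of m2). Let f_d(G) denote the number of ordered 6-tuples (v1,v2,v3,v4,v5,v6) of distinct vertices of G such that v2v5 is a double edge, v1v4 and v3v6 are simple edges, and v1v2, v2v3, v4v5 and v5v6 are non-edges. Then f_d(G) ≥ 2·m2·M·( M − 8·m2 − 12Δ − 4Δ² ). -/

import Mathlib

open Finset

lemma inj6 {α : Type*} {v0 v1 v2 v3 v4 v5 : α}
    (h01 : v0 ≠ v1) (h02 : v0 ≠ v2) (h03 : v0 ≠ v3) (h04 : v0 ≠ v4) (h05 : v0 ≠ v5)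
    (h12 : v1 ≠ v2) (h13 : v1 ≠ v3) (h14 : v1 ≠ v4) (h15 : v1 ≠ v5)
    (h23 : v2 ≠ v3) (h24 : v2 ≠ v4) (h25 : v2 ≠ v5)
    (h34 : v3 ≠ v4) (h35 : v3 ≠ v5) (h45 : v4 ≠ v5) :
    Function.Injective ![v0,v1,v2,v3,v4,v5] := by
  intro i j h
  fin_cases i <;> fin_cases j <;>
    first
      | rfl
      | exact absurd h h01 | exact absurd h h01.symm
      | exact absurd h h02 | exact absurd h h02.symm
      | exact absurd h h03 | exact absurd h h03.symm
      | exact absurd h h04 | exact absurd h h04.symm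
      | exact absurd h h05 | exact absurd h h05.symm
      | exact absurd h h12 | exact absurd h h12.symm
      | exact absurd h h13 | exact absurd h h13.symm
      | exact absurd h h14 | exact absurd h h14.symm
      | exact absurd h h15 | exact absurd h h15.symm
      | exact absurd h h23 | exact absurd h h23.symm
      | exact absurd h h24 | exact absurd h h24.symm
      | exact absurd h h25 | exact absurd h h25.symm
      | exact absurd h h34 | exact absurd h h34.symm
      | exact absurd h h35 | exact absurd h h35.symm
      | exact absurd h h45 | exact absurd h h45.symm

/-- the extra compatibility conditions for a d-switching at the double edge `(x,y)`:
`r = ((a,b),(c,e))` records the two simple edges `ab` (i.e. `v1v4`) and `ce` (`v3v6`). -/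
def extraCond {n : ℕ} (mG : Fin n → Fin n → ℕ) (x y : Fin n)
    (r : (Fin n × Fin n) × (Fin n × Fin n)) : Prop :=
  r.1.1 ≠ x ∧ r.1.1 ≠ y ∧ r.1.2 ≠ x ∧ r.1.2 ≠ y ∧
  r.2.1 ≠ r.1.1 ∧ r.2.1 ≠ x ∧ r.2.1 ≠ r.1.2 ∧ r.2.1 ≠ y ∧
  r.2.2 ≠ r.1.1 ∧ r.2.2 ≠ x ∧ r.2.2 ≠ r.1.2 ∧ r.2.2 ≠ y ∧
  mG r.1.1 x = 0 ∧ mG x r.2.1 = 0 ∧ mG r.1.2 y = 0 ∧ mG y r.2.2 = 0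

lemma rect_left {α : Type*} (S : Finset (α × α)) (P : α × α → Prop) [DecidablePred P]
    (b : ℕ) (hb : (S.filter P).card ≤ b) :
    ((S ×ˢ S).filter fun r => P r.1).card ≤ b * S.card := by
  have hsub : (S ×ˢ S).filter (fun r => P r.1) ⊆ (S.filter P) ×ˢ S := by
    intro r hr
    simp only [Finset.mem_filter, Finset.mem_product] at hr ⊢
    exact ⟨⟨hr.1.1, hr.2⟩, hr.1.2⟩
  refine (Finset.card_le_card hsub).trans ?_
  rw [Finset.card_product]
  exact Nat.mul_le_mul hb le_rfl

lemma rect_right {α : Type*} (S : Finset (α × α)) (P : α × α → Prop) [DecidablePred P]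
    (b : ℕ) (hb : (S.filter P).card ≤ b) :
    ((S ×ˢ S).filter fun r => P r.2).card ≤ S.card * b := by
  have hsub : (S ×ˢ S).filter (fun r => P r.2) ⊆ S ×ˢ (S.filter P) := by
    intro r hr
    simp only [Finset.mem_filter, Finset.mem_product] at hr ⊢
    exact ⟨hr.1.1, hr.1.2, hr.2⟩
  refine (Finset.card_le_card hsub).trans ?_
  rw [Finset.card_product]
  exact Nat.mul_le_mul le_rfl hb

lemma coup_aux {α : Type*} [Fintype α] [DecidableEq α] (S : Finset (α × α)) (Δ : ℕ)
    (f g : α × α → α) (hg : ∀ w, (S.filter fun q => g q = w).card ≤ Δ) :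
    ((S ×ˢ S).filter fun r => g r.2 = f r.1).card ≤ S.card * Δ := by
  have hsub : (S ×ˢ S).filter (fun r => g r.2 = f r.1) ⊆
      Finset.univ.biUnion
        (fun w => (S.filter fun q => f q = w) ×ˢ (S.filter fun q => g q = w)) := by
    intro r hr
    simp only [Finset.mem_filter, Finset.mem_product, Finset.mem_biUnion, Finset.mem_univ,
      true_and] at hr ⊢
    exact ⟨f r.1, ⟨hr.1.1, rfl⟩, ⟨hr.1.2, hr.2⟩⟩
  calc ((S ×ˢ S).filter fun r => g r.2 = f r.1).card
      ≤ ∑ w, ((S.filter fun q => f q = w) ×ˢ (S.filter fun q => g q = w)).card :=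
        (Finset.card_le_card hsub).trans Finset.card_biUnion_le
    _ ≤ ∑ w, (S.filter fun q => f q = w).card * Δ := by
        refine Finset.sum_le_sum fun w _ => ?_
        rw [Finset.card_product]
        exact Nat.mul_le_mul le_rfl (hg w)
    _ = (∑ w, (S.filter fun q => f q = w).card) * Δ := by rw [Finset.sum_mul]
    _ = S.card * Δ := by
        rw [← Finset.card_eq_sum_card_fiberwise (fun q _ => Finset.mem_univ (f q))]

/-- **Unconditional lower bound on the number `f_d(G)` of d-switchings.**
`G ∈ 𝒢_{0,m2}` (loopless, no restriction on `m2`).  `f_d(G)` is the number of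
ordered 6-tuples `(v1,…,v6)` of distinct vertices with `v2v5` a double edge,
`v1v4`, `v3v6` simple edges, and `v1v2`, `v2v3`, `v4v5`, `v5v6` non-edges.
Then `f_d(G) ≥ 2·m2·M·(M − 8·m2 − 12Δ − 4Δ²)`. -/
theorem fd_lower (n : ℕ) (d : Fin n → ℕ) (mG : Fin n → Fin n → ℕ)
    (M M2 Δ m2 : ℕ)
    (hM : M = ∑ i, d i)
    (hM2 : M2 = ∑ i, d i * (d i - 1))
    (hΔ : Δ = Finset.univ.sup d)
    (hsymm : ∀ u v, mG u v = mG v u)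
    (hdeg : ∀ v, (∑ u ∈ Finset.univ.filter (fun u => u ≠ v), mG v u)
        + 2 * mG v v = d v)
    (hloop : ∀ v, mG v v = 0)
    (hmul : ∀ u v, u ≠ v → mG u v ≤ 2)
    (hm2 : 2 * m2 = Set.ncard {q : Fin n × Fin n | q.1 ≠ q.2 ∧ mG q.1 q.2 = 2})
    (fd : ℕ)
    (hfd : fd = Set.ncard {t : Fin 6 → Fin n | Function.Injective t ∧
      mG (t 1) (t 4) = 2 ∧
      mG (t 0) (t 3) = 1 ∧ mG (t 2) (t 5) = 1 ∧
      mG (t 0) (t 1) = 0 ∧ mG (t 1) (t 2) = 0 ∧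
      mG (t 3) (t 4) = 0 ∧ mG (t 4) (t 5) = 0}) :
    2 * (m2 : ℝ) * M * ((M : ℝ) - 8 * m2 - 12 * Δ - 4 * Δ ^ 2) ≤ (fd : ℝ) := by
  classical
  set S : Finset (Fin n × Fin n) :=
    Finset.univ.filter (fun q => q.1 ≠ q.2 ∧ mG q.1 q.2 = 1) with hSdef
  set D : Finset (Fin n × Fin n) :=
    Finset.univ.filter (fun q => q.1 ≠ q.2 ∧ mG q.1 q.2 = 2) with hDdef
  clear_value S D
  have hdΔ : ∀ v, d v ≤ Δ := fun v => hΔ ▸ Finset.le_sup (Finset.mem_univ v)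
  -- the double edge count
  have hDcard : D.card = 2 * m2 := by
    have : {q : Fin n × Fin n | q.1 ≠ q.2 ∧ mG q.1 q.2 = 2} = ↑D := by
      ext q; simp [hDdef]
    rw [hm2, this, Set.ncard_coe_finset]
  -- neighbour counting
  have key : ∀ w, (univ.filter fun u => mG w u ≠ 0).card ≤ d w := by
    intro w
    have hsub : (univ.filter fun u => mG w u ≠ 0) ⊆ univ.filter (fun u => u ≠ w) := by
      intro u hu
      simp only [mem_filter, mem_univ, true_and] at hu ⊢
      rintro rfl; exact hu (hloop _)
    have hd : ∑ u ∈ univ.filter (fun u => u ≠ w), mG w u = d w := by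
      have := hdeg w; rw [hloop w] at this; simpa using this
    calc (univ.filter fun u => mG w u ≠ 0).card
        = ∑ _u ∈ univ.filter (fun u => mG w u ≠ 0), 1 := by
          rw [Finset.card_eq_sum_ones]
      _ ≤ ∑ u ∈ univ.filter (fun u => mG w u ≠ 0), mG w u :=
          Finset.sum_le_sum (fun u hu =>
            Nat.one_le_iff_ne_zero.2 (by simpa using (Finset.mem_filter.1 hu).2))
      _ ≤ ∑ u ∈ univ.filter (fun u => u ≠ w), mG w u :=
          Finset.sum_le_sum_of_subset hsub
      _ = d w := hd
  have keyΔ : ∀ w, (univ.filter fun u => mG w u ≠ 0).card ≤ Δ :=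
    fun w => (key w).trans (hdΔ w)
  have L1 : ∀ w, (S.filter fun q => q.1 = w).card ≤ Δ := by
    intro w
    have h1 : (S.filter fun q => q.1 = w).card ≤ (univ.filter fun u => mG w u ≠ 0).card := by
      apply Finset.card_le_card_of_injOn (fun q => q.2)
      · intro q hq
        simp only [hSdef, mem_coe, mem_filter, mem_univ, true_and] at hq ⊢
        rw [← hq.2]
        simp [hq.1.2]
      · intro q hq q' hq' hqq
        simp only [mem_coe, mem_filter] at hq hq'
        exact Prod.ext (hq.2.trans hq'.2.symm) hqq
    exact h1.trans (keyΔ w)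
  have L2 : ∀ w, (S.filter fun q => q.2 = w).card ≤ Δ := by
    intro w
    have h1 : (S.filter fun q => q.2 = w).card ≤ (univ.filter fun u => mG w u ≠ 0).card := by
      apply Finset.card_le_card_of_injOn (fun q => q.1)
      · intro q hq
        simp only [hSdef, mem_coe, mem_filter, mem_univ, true_and] at hq ⊢
        rw [hsymm, ← hq.2]
        simp [hq.1.2]
      · intro q hq q' hq' hqq
        simp only [mem_coe, mem_filter] at hq hq'
        exact Prod.ext hqq (hq.2.trans hq'.2.symm)
    exact h1.trans (keyΔ w)
  have L3 : ∀ w, (S.filter fun q => mG q.1 w ≠ 0).card ≤ Δ * Δ := by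
    intro w
    have hsub : S.filter (fun q => mG q.1 w ≠ 0) ⊆
        (univ.filter fun u => mG w u ≠ 0).biUnion (fun a => S.filter fun q => q.1 = a) := by
      intro q hq
      simp only [mem_filter, mem_biUnion, mem_univ, true_and] at hq ⊢
      exact ⟨q.1, by rw [hsymm]; exact hq.2, hq.1, rfl⟩
    calc (S.filter fun q => mG q.1 w ≠ 0).card
        ≤ ∑ a ∈ univ.filter (fun u => mG w u ≠ 0), (S.filter fun q => q.1 = a).card :=
          (Finset.card_le_card hsub).trans Finset.card_biUnion_le
      _ ≤ ∑ _a ∈ univ.filter (fun u => mG w u ≠ 0), Δ :=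
          Finset.sum_le_sum fun a _ => L1 a
      _ = (univ.filter fun u => mG w u ≠ 0).card * Δ := by
          rw [Finset.sum_const, smul_eq_mul]
      _ ≤ Δ * Δ := Nat.mul_le_mul (keyΔ w) le_rfl
  have L4 : ∀ w, (S.filter fun q => mG q.2 w ≠ 0).card ≤ Δ * Δ := by
    intro w
    have hsub : S.filter (fun q => mG q.2 w ≠ 0) ⊆
        (univ.filter fun u => mG w u ≠ 0).biUnion (fun a => S.filter fun q => q.2 = a) := by
      intro q hq
      simp only [mem_filter, mem_biUnion, mem_univ, true_and] at hq ⊢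
      exact ⟨q.2, by rw [hsymm]; exact hq.2, hq.1, rfl⟩
    calc (S.filter fun q => mG q.2 w ≠ 0).card
        ≤ ∑ a ∈ univ.filter (fun u => mG w u ≠ 0), (S.filter fun q => q.2 = a).card :=
          (Finset.card_le_card hsub).trans Finset.card_biUnion_le
      _ ≤ ∑ _a ∈ univ.filter (fun u => mG w u ≠ 0), Δ :=
          Finset.sum_le_sum fun a _ => L2 a
      _ = (univ.filter fun u => mG w u ≠ 0).card * Δ := by
          rw [Finset.sum_const, smul_eq_mul]
      _ ≤ Δ * Δ := Nat.mul_le_mul (keyΔ w) le_rfl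
  have L3' : ∀ w, (S.filter fun q => mG w q.1 ≠ 0).card ≤ Δ * Δ := by
    intro w
    have : (S.filter fun q => mG w q.1 ≠ 0) = S.filter fun q => mG q.1 w ≠ 0 :=
      Finset.filter_congr (fun q _ => by rw [hsymm])
    rw [this]; exact L3 w
  have L4' : ∀ w, (S.filter fun q => mG w q.2 ≠ 0).card ≤ Δ * Δ := by
    intro w
    have : (S.filter fun q => mG w q.2 ≠ 0) = S.filter fun q => mG q.2 w ≠ 0 :=
      Finset.filter_congr (fun q _ => by rw [hsymm])
    rw [this]; exact L4 w
  -- total edge count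
  have hSM : S.card + 2 * D.card = M := by
    have h1 : ∑ q ∈ univ.filter (fun q : Fin n × Fin n => q.1 ≠ q.2), mG q.1 q.2 = M := by
      rw [hM, Finset.sum_filter, Fintype.sum_prod_type]
      apply Finset.sum_congr rfl
      intro v _
      have hd : ∑ u ∈ univ.filter (fun u => u ≠ v), mG v u = d v := by
        have := hdeg v; rw [hloop v] at this; simpa using this
      calc (∑ u, if (v, u).1 ≠ (v, u).2 then mG (v,u).1 (v,u).2 else 0)
          = ∑ u, if u ≠ v then mG v u else 0 := by
            apply Finset.sum_congr rfl
            intro u _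
            simp only [ne_comm]
        _ = ∑ u ∈ univ.filter (fun u => u ≠ v), mG v u := (Finset.sum_filter _ _).symm
        _ = d v := hd
    have h2 : ∑ q ∈ univ.filter (fun q : Fin n × Fin n => q.1 ≠ q.2), mG q.1 q.2
        = S.card + 2 * D.card := by
      have hpt : ∀ q ∈ univ.filter (fun q : Fin n × Fin n => q.1 ≠ q.2),
          mG q.1 q.2 = (if mG q.1 q.2 = 1 then 1 else 0)
            + 2 * (if mG q.1 q.2 = 2 then 1 else 0) := by
        intro q hq
        have hne : q.1 ≠ q.2 := by simpa using (Finset.mem_filter.1 hq).2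
        have h2le := hmul q.1 q.2 hne
        clear * - h2le
        split_ifs with e1 e2 <;> omega
      rw [Finset.sum_congr rfl hpt, Finset.sum_add_distrib, ← Finset.mul_sum]
      congr 1
      · rw [← Finset.sum_filter, Finset.filter_filter, hSdef]
        simp
      · congr 1
        rw [← Finset.sum_filter, Finset.filter_filter, hDdef]
        simp
    clear * - h1 h2
    omega
  -- the encoded tuple set
  set A : Finset ((Fin n × Fin n) × ((Fin n × Fin n) × (Fin n × Fin n))) :=
    univ.filter (fun z => z.1 ∈ D ∧ z.2.1 ∈ S ∧ z.2.2 ∈ S ∧ extraCond mG z.1.1 z.1.2 z.2)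
    with hAdef
  have hfdA : fd = A.card := by
    have hset : {t : Fin 6 → Fin n | Function.Injective t ∧
        mG (t 1) (t 4) = 2 ∧
        mG (t 0) (t 3) = 1 ∧ mG (t 2) (t 5) = 1 ∧
        mG (t 0) (t 1) = 0 ∧ mG (t 1) (t 2) = 0 ∧
        mG (t 3) (t 4) = 0 ∧ mG (t 4) (t 5) = 0}
        = ↑(univ.filter (fun t : Fin 6 → Fin n => Function.Injective t ∧
        mG (t 1) (t 4) = 2 ∧
        mG (t 0) (t 3) = 1 ∧ mG (t 2) (t 5) = 1 ∧
        mG (t 0) (t 1) = 0 ∧ mG (t 1) (t 2) = 0 ∧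
        mG (t 3) (t 4) = 0 ∧ mG (t 4) (t 5) = 0)) := by
      ext t; simp
    rw [hfd, hset, Set.ncard_coe_finset]
    apply Finset.card_bij'
      (i := fun t _ => ((t 1, t 4), ((t 0, t 3), (t 2, t 5))))
      (j := fun z _ => ![z.2.1.1, z.1.1, z.2.2.1, z.2.1.2, z.1.2, z.2.2.2])
    · -- hi : image lands in A
      intro t ht
      simp only [mem_filter, mem_univ, true_and] at ht
      obtain ⟨hinj, h25, h14, h36, e12, e23, e45, e56⟩ := ht
      have hne : ∀ i j : Fin 6, i ≠ j → t i ≠ t j := fun i j h => hinj.ne h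
      simp only [hAdef, hSdef, hDdef, mem_filter, mem_univ, true_and]
      refine ⟨⟨hne 1 4 (by decide), h25⟩, ⟨hne 0 3 (by decide), h14⟩,
        ⟨hne 2 5 (by decide), h36⟩, ?_⟩
      exact ⟨hne 0 1 (by decide), hne 0 4 (by decide), hne 3 1 (by decide),
        hne 3 4 (by decide), hne 2 0 (by decide), hne 2 1 (by decide),
        hne 2 3 (by decide), hne 2 4 (by decide), hne 5 0 (by decide),
        hne 5 1 (by decide), hne 5 3 (by decide), hne 5 4 (by decide),
        e12, e23, e45, e56⟩
    · -- hj : the inverse lands in the tuple set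
      intro z hz
      simp only [hAdef, hSdef, hDdef, mem_filter, mem_univ, true_and] at hz
      obtain ⟨⟨hxy, hxy2⟩, ⟨hab, hab1⟩, ⟨hce, hce1⟩, hE⟩ := hz
      obtain ⟨k1, k2, k3, k4, k5, k6, k7, k8, k9, k10, k11, k12, g1, g2, g3, g4⟩ := hE
      simp only [mem_filter, mem_univ, true_and]
      refine ⟨inj6 k1 k5.symm hab k2 k9.symm k6.symm k3.symm hxy k10.symm
        k7 k8 hce k4 k11.symm k12.symm, ?_, ?_, ?_, ?_, ?_, ?_, ?_⟩
      · exact hxy2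
      · exact hab1
      · exact hce1
      · exact g1
      · exact g2
      · exact g3
      · exact g4
    · -- left inverse
      intro t _
      funext k
      fin_cases k <;> rfl
    · -- right inverse
      intro z _
      rfl
  -- per-fiber lower bound
  have hperfiber : ∀ p ∈ D, S.card * S.card ≤
      (A.filter fun z => z.1 = p).card + S.card * (12 * Δ + 4 * (Δ * Δ)) := by
    rintro ⟨x, y⟩ hp
    have hbad : ((S ×ˢ S).filter fun r => ¬ extraCond mG x y r).card
        ≤ S.card * (12 * Δ + 4 * (Δ * Δ)) := by
      rw [Finset.filter_congr (q := fun r : (Fin n × Fin n) × (Fin n × Fin n) =>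
          (r.1.1 = x ∨
          (r.1.1 = y ∨
          (r.1.2 = x ∨
          (r.1.2 = y ∨
          (r.2.1 = r.1.1 ∨
          (r.2.1 = x ∨
          (r.2.1 = r.1.2 ∨
          (r.2.1 = y ∨
          (r.2.2 = r.1.1 ∨
          (r.2.2 = x ∨
          (r.2.2 = r.1.2 ∨
          (r.2.2 = y ∨
          (mG r.1.1 x ≠ 0 ∨
          (mG x r.2.1 ≠ 0 ∨
          (mG r.1.2 y ≠ 0 ∨
          mG y r.2.2 ≠ 0))))))))))))))))
        (fun r _ => by simp only [extraCond, ne_eq, not_and_or, not_not])]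
      simp only [Finset.filter_or]
      refine le_trans ?_ (Nat.le_of_eq (show (Δ * S.card +
          (Δ * S.card +
          (Δ * S.card +
          (Δ * S.card +
          (S.card * Δ +
          (S.card * Δ +
          (S.card * Δ +
          (S.card * Δ +
          (S.card * Δ +
          (S.card * Δ +
          (S.card * Δ +
          (S.card * Δ +
          (Δ * Δ * S.card +
          (S.card * (Δ * Δ) +
          (Δ * Δ * S.card +
          S.card * (Δ * Δ)))))))))))))))) = S.card * (12 * Δ + 4 * (Δ * Δ)) by ring))
      refine (Finset.card_union_le _ _).trans (Nat.add_le_add (rect_left S (fun q => q.1 = x) _ (L1 x)) ?_)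
      refine (Finset.card_union_le _ _).trans (Nat.add_le_add (rect_left S (fun q => q.1 = y) _ (L1 y)) ?_)
      refine (Finset.card_union_le _ _).trans (Nat.add_le_add (rect_left S (fun q => q.2 = x) _ (L2 x)) ?_)
      refine (Finset.card_union_le _ _).trans (Nat.add_le_add (rect_left S (fun q => q.2 = y) _ (L2 y)) ?_)
      refine (Finset.card_union_le _ _).trans (Nat.add_le_add (coup_aux S Δ Prod.fst Prod.fst L1) ?_)
      refine (Finset.card_union_le _ _).trans (Nat.add_le_add (rect_right S (fun q => q.1 = x) _ (L1 x)) ?_)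
      refine (Finset.card_union_le _ _).trans (Nat.add_le_add (coup_aux S Δ Prod.snd Prod.fst L1) ?_)
      refine (Finset.card_union_le _ _).trans (Nat.add_le_add (rect_right S (fun q => q.1 = y) _ (L1 y)) ?_)
      refine (Finset.card_union_le _ _).trans (Nat.add_le_add (coup_aux S Δ Prod.fst Prod.snd L2) ?_)
      refine (Finset.card_union_le _ _).trans (Nat.add_le_add (rect_right S (fun q => q.2 = x) _ (L2 x)) ?_)
      refine (Finset.card_union_le _ _).trans (Nat.add_le_add (coup_aux S Δ Prod.snd Prod.snd L2) ?_)
      refine (Finset.card_union_le _ _).trans (Nat.add_le_add (rect_right S (fun q => q.2 = y) _ (L2 y)) ?_)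
      refine (Finset.card_union_le _ _).trans (Nat.add_le_add (rect_left S (fun q => mG q.1 x ≠ 0) _ (L3 x)) ?_)
      refine (Finset.card_union_le _ _).trans (Nat.add_le_add (rect_right S (fun q => mG x q.1 ≠ 0) _ (L3' x)) ?_)
      refine (Finset.card_union_le _ _).trans (Nat.add_le_add (rect_left S (fun q => mG q.2 y ≠ 0) _ (L4 y)) ?_)
      exact rect_right S (fun q => mG y q.2 ≠ 0) _ (L4' y)
    have hGp : ((S ×ˢ S).filter fun r => extraCond mG x y r).card
        ≤ (A.filter fun z => z.1 = (x, y)).card := by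
      apply Finset.card_le_card_of_injOn (fun r => ((x, y), r))
      · intro r hr
        simp only [mem_coe, mem_filter, Finset.mem_product] at hr
        simp only [mem_coe, mem_filter, hAdef, mem_filter, mem_univ, true_and]
        exact ⟨⟨hp, hr.1.1, hr.1.2, hr.2⟩, trivial⟩
      · intro r _ r' _ h
        exact congrArg Prod.snd h
    have hsplit := Finset.card_filter_add_card_filter_not
      (s := S ×ˢ S) (p := fun r => extraCond mG x y r)
    have hSS : (S ×ˢ S).card = S.card * S.card := Finset.card_product S S
    clear * - hGp hbad hsplit hSS
    omega
  -- fiberwise decomposition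
  have hAfib : A.card = ∑ p ∈ D, (A.filter fun z => z.1 = p).card :=
    Finset.card_eq_sum_card_fiberwise
      (fun z hz => by
        simp only [hAdef, mem_coe, mem_filter] at hz
        exact hz.2.1)
  have hsum : D.card * (S.card * S.card)
      ≤ A.card + D.card * (S.card * (12 * Δ + 4 * (Δ * Δ))) := by
    calc D.card * (S.card * S.card) = ∑ _p ∈ D, S.card * S.card := by
          rw [Finset.sum_const, smul_eq_mul]
      _ ≤ ∑ p ∈ D, ((A.filter fun z => z.1 = p).card + S.card * (12 * Δ + 4 * (Δ * Δ))) :=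
          Finset.sum_le_sum hperfiber
      _ = A.card + D.card * (S.card * (12 * Δ + 4 * (Δ * Δ))) := by
          rw [Finset.sum_add_distrib, ← hAfib, Finset.sum_const, smul_eq_mul]
  -- conclude
  have hkey : 2 * m2 * (S.card * S.card)
      ≤ fd + 2 * m2 * (S.card * (12 * Δ + 4 * (Δ * Δ))) := by
    rw [hfdA]
    rw [hDcard] at hsum
    exact hsum
  have hS4 : S.card + 4 * m2 = M := by
    clear * - hSM hDcard
    omega
  have h1R : 2 * (m2 : ℝ) * ((S.card : ℝ) * S.card)
      ≤ (fd : ℝ) + 2 * m2 * ((S.card : ℝ) * (12 * Δ + 4 * (Δ * Δ))) := by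
    exact_mod_cast hkey
  have h2R : (S.card : ℝ) + 4 * m2 = M := by exact_mod_cast hS4
  have hm0 : (0 : ℝ) ≤ m2 := Nat.cast_nonneg _
  have hd0 : (0 : ℝ) ≤ Δ := Nat.cast_nonneg _
  have hEq : 2 * (m2 : ℝ) * M * ((M : ℝ) - 8 * m2 - 12 * Δ - 4 * Δ ^ 2)
      = 2 * m2 * ((S.card : ℝ) * S.card) - 2 * m2 * ((S.card : ℝ) * (12 * Δ + 4 * (Δ * Δ)))
        - (32 * m2 ^ 3 + 96 * m2 ^ 2 * Δ + 32 * m2 ^ 2 * Δ ^ 2) := by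
    rw [← h2R]; ring
  rw [hEq]
  nlinarith [h1R, mul_nonneg (mul_nonneg hm0 hm0) hm0,
    mul_nonneg (mul_nonneg hm0 hm0) hd0, mul_nonneg (mul_nonneg hm0 hd0) hd0]
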